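/- Let $b$ be the symbol $h_{I'} \otimes h_{J'}$ and $\mathcal{T}^b_* = [T_2^*, [T_1^*, b]]$. If $\mathcal{T}^{h_{I'} \otimes h_{J'}}_*(h_{I''} \otimes h_{J''}) \neq 0$, then $|I'| \leq |\widehat{I''}|$ and $|J'| \leq |\widehat{J''}|$, i.e., the symbol's Haar frequency is 'smaller' (coarser) than the test function's parent scale. -/

import Mathlib

open MeasureTheory
open scoped Classical

/-- A dyadic interval `[k·2^(-n), (k+1)·2^(-n))` on the real line, encoded by its
scale `n` (so that `|I| = 2^(-n)`) and its position `k`. -/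
structure DI where
  n : ℤ
  k : ℤ

namespace DI

/-- The underlying half-open interval of a dyadic interval. -/
noncomputable def set (I : DI) : Set ℝ :=
  Set.Ico ((I.k : ℝ) * (2:ℝ) ^ (-I.n)) (((I.k : ℝ) + 1) * (2:ℝ) ^ (-I.n))

/-- The length `|I| = 2^(-n)` of a dyadic interval. -/
noncomputable def len (I : DI) : ℝ := (2:ℝ) ^ (-I.n)

/-- `I` is *even* when `|I| = 2^(-2k)` for an integer `k`. -/
def IsEven (I : DI) : Prop := Even I.n

/-- The dyadic parent `Î` of `I`. -/
def parent (I : DI) : DI := ⟨I.n - 1, Int.ediv I.k 2⟩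

/-- The left (lower) half `I₋` of `I`. -/
def left (I : DI) : DI := ⟨I.n + 1, 2 * I.k⟩

/-- The right (upper) half `I₊` of `I`. -/
def right (I : DI) : DI := ⟨I.n + 1, 2 * I.k + 1⟩

/-- The dyadic sibling of `I` (the other child of `Î`). -/
def sibling (I : DI) : DI := if I.k % 2 = 1 then ⟨I.n, I.k - 1⟩ else ⟨I.n, I.k + 1⟩

/-- `sgn (I, Î)`: equal to `+1` if `I = (Î)₊` (the right child) and `-1` if `I = (Î)₋`. -/
noncomputable def sgn (I : DI) : ℝ := if I.k % 2 = 1 then 1 else -1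

/-- Containment of dyadic intervals. -/
def Sub (I J : DI) : Prop := I.set ⊆ J.set

end DI

/-- The Haar function `h_I = |I|^{-1/2} (𝟏_{I₊} - 𝟏_{I₋})`. -/
noncomputable def haar (I : DI) : ℝ → ℝ := fun x =>
  Real.sqrt ((2:ℝ) ^ I.n) *
    (if x ∈ DI.set (DI.right I) then 1 else if x ∈ DI.set (DI.left I) then -1 else 0)

/-- The Haar coefficient `(f, h_I)`. -/
noncomputable def hcoef (f : ℝ → ℝ) (I : DI) : ℝ := ∫ x, f x * haar I x

/-- The average `⟨f⟩_I = (f, 𝟏_I/|I|)`. -/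
noncomputable def avg (f : ℝ → ℝ) (I : DI) : ℝ := (∫ x in DI.set I, f x) / DI.len I

/-- The normalized indicator `𝟏̃_I = 𝟏_I/|I|`. -/
noncomputable def nind (I : DI) : ℝ → ℝ := fun x => if x ∈ DI.set I then 1 / DI.len I else 0

/-- The dyadic shift `T`, with `T h_I = h_{I₊} - h_{I₋}` for `I` even and `T h_I = 0`
for `I` odd. -/
noncomputable def shift (f : ℝ → ℝ) : ℝ → ℝ := fun x =>
  ∑' I : DI, if DI.IsEven I then hcoef f I * (haar (DI.right I) x - haar (DI.left I) x) else 0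

/-- The adjoint dyadic shift `T*`, with `T* h_I = sgn(I, Î) h_{Î}` for `I` odd and
`T* h_I = 0` for `I` even. -/
noncomputable def shiftAdj (f : ℝ → ℝ) : ℝ → ℝ := fun x =>
  ∑' I : DI, if DI.IsEven I then 0 else hcoef f I * DI.sgn I * haar (DI.parent I) x

/-- The paraproduct `D(b, f) = ∑_I ⟨b⟩_I (f, h_I) h_I`. -/
noncomputable def Dpara (b f : ℝ → ℝ) : ℝ → ℝ := fun x =>
  ∑' I : DI, avg b I * hcoef f I * haar I x

/-- The dyadic shift `T₁` acting in the first variable. -/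
noncomputable def shift1 (F : ℝ × ℝ → ℝ) : ℝ × ℝ → ℝ := fun p => shift (fun x => F (x, p.2)) p.1

/-- The dyadic shift `T₂` acting in the second variable. -/
noncomputable def shift2 (F : ℝ × ℝ → ℝ) : ℝ × ℝ → ℝ := fun p => shift (fun y => F (p.1, y)) p.2

/-- The adjoint shift `T₁*` acting in the first variable. -/
noncomputable def shift1Adj (F : ℝ × ℝ → ℝ) : ℝ × ℝ → ℝ := fun p =>
  shiftAdj (fun x => F (x, p.2)) p.1

/-- The adjoint shift `T₂*` acting in the second variable. -/
noncomputable def shift2Adj (F : ℝ × ℝ → ℝ) : ℝ × ℝ → ℝ := fun p =>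
  shiftAdj (fun y => F (p.1, y)) p.2

/-- The repeated commutator `𝒯^b = [T₂,[T₁,b]] = T₂T₁b· − T₂ b T₁ − T₁ b T₂ + b T₁T₂`. -/
noncomputable def repComm (b F : ℝ × ℝ → ℝ) : ℝ × ℝ → ℝ := fun p =>
  shift2 (shift1 (fun q => b q * F q)) p - shift2 (fun q => b q * shift1 F q) p
    - shift1 (fun q => b q * shift2 F q) p + b p * shift1 (shift2 F) p

/-- The repeated commutator with the adjoint shifts, `𝒯^b_* = [T₂*,[T₁*,b]]`. -/
noncomputable def repCommAdj (b F : ℝ × ℝ → ℝ) : ℝ × ℝ → ℝ := fun p =>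
  shift2Adj (shift1Adj (fun q => b q * F q)) p - shift2Adj (fun q => b q * shift1Adj F q) p
    - shift1Adj (fun q => b q * shift2Adj F q) p + b p * shift1Adj (shift2Adj F) p

/-- The bi-parameter Haar coefficient `(b, h_I ⊗ h_J)`. -/
noncomputable def hcoef2 (b : ℝ × ℝ → ℝ) (I J : DI) : ℝ :=
  ∫ p : ℝ × ℝ, b p * haar I p.1 * haar J p.2

/-- A dyadic rectangle `R = I × J` as a subset of the plane. -/
noncomputable def dRect (R : DI × DI) : Set (ℝ × ℝ) := DI.set R.1 ×ˢ DI.set R.2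

/-- The strong dyadic maximal function `M_s^d`. -/
noncomputable def strongMax (f : ℝ × ℝ → ℝ) (p : ℝ × ℝ) : ℝ :=
  sSup {r : ℝ | ∃ R : DI × DI, p ∈ dRect R ∧
    r = (∫ q in dRect R, |f q|) / (DI.len R.1 * DI.len R.2)}

/-- The enlargement `U = {M_s^d 𝟏_{U₀} ≥ 1/16}` of a set `U₀`. -/
noncomputable def enlarge (U0 : Set (ℝ × ℝ)) : Set (ℝ × ℝ) :=
  {p | (1:ℝ)/16 ≤ strongMax (U0.indicator fun _ => (1:ℝ)) p}

lemma two_zpow_pos (n : ℤ) : (0:ℝ) < (2:ℝ) ^ n := zpow_pos two_pos n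

lemma DI.set_nonempty (I : DI) : I.set.Nonempty := by
  refine ⟨(I.k : ℝ) * (2:ℝ) ^ (-I.n), ?_, ?_⟩
  · exact le_refl _
  · have := two_zpow_pos (-I.n); nlinarith

-- generic interval inclusion from integer endpoint inequalities
lemma DI.sub_of_int {I K : DI} (hd : ∃ d : ℕ, K.n = I.n + d)
    (h1 : ∀ d : ℕ, K.n = I.n + d → I.k * 2^d ≤ K.k ∧ K.k + 1 ≤ (I.k + 1) * 2^d) :
    K.set ⊆ I.set := by
  obtain ⟨d, hdn⟩ := hd
  obtain ⟨ha, hb⟩ := h1 d hdn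
  have hsplit : (2:ℝ) ^ (-I.n) = (2:ℝ)^(d:ℕ) * (2:ℝ) ^ (-K.n) := by
    rw [← zpow_natCast (2:ℝ) d, ← zpow_add₀ (two_ne_zero)]
    congr 1; omega
  have hpos := two_zpow_pos (-K.n)
  apply Set.Ico_subset_Ico
  · rw [hsplit]
    have : ((I.k : ℝ) * 2^(d:ℕ)) ≤ (K.k : ℝ) := by exact_mod_cast ha
    nlinarith
  · rw [hsplit]
    have : ((K.k : ℝ) + 1) ≤ ((I.k : ℝ) + 1) * 2^(d:ℕ) := by exact_mod_cast hb
    nlinarith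

lemma DI.nested {I K : DI} (hn : I.n ≤ K.n) (hx : (I.set ∩ K.set).Nonempty) :
    K.set ⊆ I.set := by
  obtain ⟨x, hxI, hxK⟩ := hx
  obtain ⟨hI1, hI2⟩ := hxI
  obtain ⟨hK1, hK2⟩ := hxK
  refine DI.sub_of_int ⟨(K.n - I.n).toNat, by omega⟩ ?_
  intro d hdn
  have hsplit : (2:ℝ) ^ (-I.n) = (2:ℝ)^(d:ℕ) * (2:ℝ) ^ (-K.n) := by
    rw [← zpow_natCast (2:ℝ) d, ← zpow_add₀ (two_ne_zero)]
    congr 1; omega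
  have hpos := two_zpow_pos (-K.n)
  have e1 : (I.k : ℝ) * 2^(d:ℕ) < K.k + 1 := by
    have : (I.k:ℝ) * ((2:ℝ)^(d:ℕ) * (2:ℝ)^(-K.n)) < ((K.k:ℝ)+1) * (2:ℝ)^(-K.n) := by
      rw [← hsplit]; exact lt_of_le_of_lt hI1 hK2
    nlinarith
  have e2 : (K.k : ℝ) < ((I.k:ℝ) + 1) * 2^(d:ℕ) := by
    have : (K.k:ℝ) * (2:ℝ)^(-K.n) < ((I.k:ℝ)+1) * ((2:ℝ)^(d:ℕ) * (2:ℝ)^(-K.n)) := by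
      rw [← hsplit]; exact lt_of_le_of_lt hK1 hI2
    nlinarith
  have e1' : I.k * 2^d < K.k + 1 := by exact_mod_cast e1
  have e2' : K.k < (I.k + 1) * 2^d := by exact_mod_cast e2
  omega

lemma DI.left_subset (I : DI) : (DI.left I).set ⊆ I.set := by
  refine DI.sub_of_int ⟨1, by simp [DI.left]⟩ ?_
  intro d hdn
  have : d = 1 := by simp [DI.left] at hdn; omega
  subst this; simp [DI.left]; omega

lemma DI.right_subset (I : DI) : (DI.right I).set ⊆ I.set := by
  refine DI.sub_of_int ⟨1, by simp [DI.right]⟩ ?_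
  intro d hdn
  have : d = 1 := by simp [DI.right] at hdn; omega
  subst this; simp [DI.right]; omega

lemma DI.subset_parent (I : DI) : I.set ⊆ (DI.parent I).set := by
  refine DI.sub_of_int ⟨1, by simp [DI.parent]⟩ ?_
  intro d hdn
  have : d = 1 := by simp [DI.parent] at hdn; omega
  subst this
  simp only [DI.parent]
  have h2 : Int.ediv I.k 2 = I.k / 2 := rfl
  rw [h2]; omega

lemma haar_support {I : DI} {x : ℝ} (h : haar I x ≠ 0) : x ∈ I.set := by
  by_cases h1 : x ∈ (DI.right I).set
  · exact DI.right_subset I h1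
  by_cases h2 : x ∈ (DI.left I).set
  · exact DI.left_subset I h2
  · exfalso; apply h; simp [haar, h1, h2]

lemma haar_const {I K : DI} (hn : I.n + 1 ≤ K.n) {x y : ℝ}
    (hx : x ∈ K.set) (hy : y ∈ K.set) : haar I x = haar I y := by
  by_cases hr : ((DI.right I).set ∩ K.set).Nonempty
  · have hs := DI.nested (I := DI.right I) (K := K) (by simp [DI.right]; omega) hr
    simp [haar, hs hx, hs hy]
  · have hxr : x ∉ (DI.right I).set := fun hc => hr ⟨x, hc, hx⟩
    have hyr : y ∉ (DI.right I).set := fun hc => hr ⟨y, hc, hy⟩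
    by_cases hl : ((DI.left I).set ∩ K.set).Nonempty
    · have hs := DI.nested (I := DI.left I) (K := K) (by simp [DI.left]; omega) hl
      simp [haar, hxr, hyr, hs hx, hs hy]
    · have hxl : x ∉ (DI.left I).set := fun hc => hl ⟨x, hc, hx⟩
      have hyl : y ∉ (DI.left I).set := fun hc => hl ⟨y, hc, hy⟩
      simp [haar, hxr, hyr, hxl, hyl]

lemma right_left_notmem {I : DI} {x : ℝ} (h : x ∈ (DI.right I).set) :
    x ∉ (DI.left I).set := by
  intro h2
  simp only [DI.set, DI.right, DI.left, Set.mem_Ico] at h h2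
  push_cast at h h2
  linarith [h.1, h2.2]

lemma haar_eq (I : DI) : haar I = fun x => Real.sqrt ((2:ℝ)^I.n) *
    ((DI.right I).set.indicator (fun _ => (1:ℝ)) x - (DI.left I).set.indicator (fun _ => (1:ℝ)) x) := by
  funext x
  simp only [haar, Set.indicator]
  by_cases h1 : x ∈ (DI.right I).set
  · simp [h1, right_left_notmem h1]
  · by_cases h2 : x ∈ (DI.left I).set <;> simp [h1, h2]

lemma integral_haar (I : DI) : ∫ x, haar I x = 0 := by
  rw [haar_eq]
  rw [MeasureTheory.integral_const_mul]
  have hR : MeasurableSet (DI.right I).set := measurableSet_Ico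
  have hL : MeasurableSet (DI.left I).set := measurableSet_Ico
  have iR : Integrable ((DI.right I).set.indicator (fun _ => (1:ℝ))) := by
    rw [integrable_indicator_iff hR]
    exact integrableOn_const measure_Ico_lt_top.ne
  have iL : Integrable ((DI.left I).set.indicator (fun _ => (1:ℝ))) := by
    rw [integrable_indicator_iff hL]
    exact integrableOn_const measure_Ico_lt_top.ne
  rw [MeasureTheory.integral_sub iR iL]
  have h1 : ∫ x, (DI.right I).set.indicator (fun _ => (1:ℝ)) x = (volume (DI.right I).set).toReal :=
    MeasureTheory.integral_indicator_one hR
  have h2 : ∫ x, (DI.left I).set.indicator (fun _ => (1:ℝ)) x = (volume (DI.left I).set).toReal :=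
    MeasureTheory.integral_indicator_one hL
  rw [h1, h2]
  have hv : volume (DI.right I).set = volume (DI.left I).set := by
    simp only [DI.set, DI.right, DI.left, Real.volume_Ico]
    congr 1
    push_cast
    ring
  rw [hv, sub_self, mul_zero]


lemma hcoef_const_mul (a : ℝ) (f : ℝ → ℝ) (I : DI) :
    hcoef (fun t => a * f t) I = a * hcoef f I := by
  simp only [hcoef, mul_assoc]
  exact MeasureTheory.integral_const_mul a _

lemma shiftAdj_const_mul (a : ℝ) (f : ℝ → ℝ) :
    shiftAdj (fun t => a * f t) = fun x => a * shiftAdj f x := by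
  funext x
  simp only [shiftAdj, hcoef_const_mul]
  rw [← tsum_mul_left]
  congr 1
  funext I
  by_cases h : DI.IsEven I <;> simp [h] <;> ring

lemma hcoef_haar_coarse {I K : DI} (hn : I.n + 1 ≤ K.n) : hcoef (haar K) I = 0 := by
  obtain ⟨x0, hx0⟩ := DI.set_nonempty K
  have key : ∀ x, haar K x * haar I x = haar I x0 * haar K x := by
    intro x
    by_cases hx : x ∈ K.set
    · rw [haar_const hn hx hx0]; ring
    · have : haar K x = 0 := by
        by_contra hc; exact hx (haar_support hc)
      rw [this]; ring
  simp only [hcoef]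
  rw [show (fun x => haar K x * haar I x) = fun x => haar I x0 * haar K x from funext key]
  rw [MeasureTheory.integral_const_mul, integral_haar, mul_zero]

lemma hcoef_haar_disjoint {I K : DI} (hd : ¬ (I.set ∩ K.set).Nonempty) :
    hcoef (haar K) I = 0 := by
  simp only [hcoef]
  have key : ∀ x, haar K x * haar I x = 0 := by
    intro x
    by_cases hK : haar K x = 0
    · rw [hK, zero_mul]
    by_cases hI : haar I x = 0
    · rw [hI, mul_zero]
    exact absurd ⟨x, haar_support hI, haar_support hK⟩ hd
  rw [show (fun x => haar K x * haar I x) = fun _ => (0:ℝ) from funext key]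
  exact integral_zero _ _


lemma main1 {I' I'' : DI} (h : I'.n + 2 ≤ I''.n) :
    shiftAdj (fun t => haar I' t * haar I'' t) =
      fun x => haar I' x * shiftAdj (haar I'') x := by
  obtain ⟨x0, hx0⟩ := DI.set_nonempty I''
  have hu : (fun t => haar I' t * haar I'' t) = fun t => haar I' x0 * haar I'' t := by
    funext t
    by_cases ht : t ∈ I''.set
    · rw [haar_const (show I'.n + 1 ≤ I''.n by omega) ht hx0]
    · have : haar I'' t = 0 := by by_contra hc; exact ht (haar_support hc)
      rw [this]; ring
  rw [hu, shiftAdj_const_mul]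
  funext x
  by_cases hcx : haar I' x = haar I' x0
  · rw [hcx]
  · suffices hS : shiftAdj (haar I'') x = 0 by rw [hS]; ring
    have hterm : ∀ I : DI,
        (if DI.IsEven I then 0 else hcoef (haar I'') I * DI.sgn I * haar (DI.parent I) x)
          = (0:ℝ) := by
      intro I
      by_cases he : DI.IsEven I
      · simp [he]
      simp only [he, if_false]
      by_cases h1 : hcoef (haar I'') I = 0
      · rw [h1]; ring
      by_cases h2 : haar (DI.parent I) x = 0
      · rw [h2]; ring
      exfalso
      have hint : (I''.set ∩ I.set).Nonempty := by
        by_contra hc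
        apply h1
        apply hcoef_haar_disjoint
        intro ⟨y, hy1, hy2⟩
        exact hc ⟨y, hy2, hy1⟩
      have hnI : I''.n ≤ I.n := by
        by_contra hc; push_neg at hc; exact h1 (hcoef_haar_coarse (by omega))
      have hsub : I.set ⊆ I''.set := DI.nested hnI hint
      have hPn : (DI.parent I'').n ≤ (DI.parent I).n := by simp [DI.parent]; omega
      have hPint : ((DI.parent I'').set ∩ (DI.parent I).set).Nonempty := by
        obtain ⟨y, hy⟩ := DI.set_nonempty I
        exact ⟨y, DI.subset_parent I'' (hsub hy), DI.subset_parent I hy⟩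
      have hPsub := DI.nested hPn hPint
      have hxP : x ∈ (DI.parent I'').set := hPsub (haar_support h2)
      have hx0P : x0 ∈ (DI.parent I'').set := DI.subset_parent I'' hx0
      exact hcx (haar_const (K := DI.parent I'')
        (show I'.n + 1 ≤ (DI.parent I'').n by simp [DI.parent]; omega) hxP hx0P)
    calc shiftAdj (haar I'') x = ∑' _ : DI, (0:ℝ) := tsum_congr hterm
      _ = 0 := tsum_zero


lemma S1 (u v : ℝ → ℝ) (p : ℝ × ℝ) :
    shift1Adj (fun q => u q.1 * v q.2) p = shiftAdj u p.1 * v p.2 := by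
  simp only [shift1Adj]
  rw [show (fun x => u x * v p.2) = fun x => v p.2 * u x from funext fun x => mul_comm _ _,
    shiftAdj_const_mul]
  exact mul_comm _ _

lemma S2 (u v : ℝ → ℝ) (p : ℝ × ℝ) :
    shift2Adj (fun q => u q.1 * v q.2) p = u p.1 * shiftAdj v p.2 := by
  simp only [shift2Adj]
  rw [shiftAdj_const_mul]


lemma S1f (u v : ℝ → ℝ) :
    shift1Adj (fun q => u q.1 * v q.2) = fun p => shiftAdj u p.1 * v p.2 := by
  funext p
  simp only [shift1Adj]
  rw [show (fun x => u x * v p.2) = fun x => v p.2 * u x from funext fun x => mul_comm _ _,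
    shiftAdj_const_mul]
  exact mul_comm _ _

lemma S2f (u v : ℝ → ℝ) :
    shift2Adj (fun q => u q.1 * v q.2) = fun p => u p.1 * shiftAdj v p.2 := by
  funext p
  simp only [shift2Adj]
  rw [shiftAdj_const_mul]

lemma repCommAdj_tensor (f1 g1 f2 g2 : ℝ → ℝ) :
    repCommAdj (fun p => f1 p.1 * g1 p.2) (fun p => f2 p.1 * g2 p.2) = fun p =>
      (shiftAdj (fun t => f1 t * f2 t) p.1 - f1 p.1 * shiftAdj f2 p.1) *
      (shiftAdj (fun t => g1 t * g2 t) p.2 - g1 p.2 * shiftAdj g2 p.2) := by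
  funext p
  simp only [repCommAdj]
  rw [show (fun q : ℝ×ℝ => f1 q.1 * g1 q.2 * (f2 q.1 * g2 q.2)) =
      fun q : ℝ×ℝ => (f1 q.1 * f2 q.1) * (g1 q.2 * g2 q.2) from funext fun q => by ring]
  rw [S1f (fun t => f1 t * f2 t) (fun t => g1 t * g2 t)]
  rw [S2f (shiftAdj (fun t => f1 t * f2 t)) (fun t => g1 t * g2 t)]
  rw [S1f f2 g2, S2f f2 g2]
  beta_reduce
  rw [show (fun q : ℝ×ℝ => f1 q.1 * g1 q.2 * (shiftAdj f2 q.1 * g2 q.2)) =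
      fun q : ℝ×ℝ => (f1 q.1 * shiftAdj f2 q.1) * (g1 q.2 * g2 q.2) from funext fun q => by ring]
  rw [S2f (fun t => f1 t * shiftAdj f2 t) (fun t => g1 t * g2 t)]
  rw [show (fun q : ℝ×ℝ => f1 q.1 * g1 q.2 * (f2 q.1 * shiftAdj g2 q.2)) =
      fun q : ℝ×ℝ => (f1 q.1 * f2 q.1) * (g1 q.2 * shiftAdj g2 q.2) from funext fun q => by ring]
  rw [S1f (fun t => f1 t * f2 t) (fun t => g1 t * shiftAdj g2 t)]
  rw [S1f f2 (shiftAdj g2)]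
  beta_reduce
  ring

/-- **The symbol is "smaller" than the test function:** if
`𝒯^{h_{I'} ⊗ h_{J'}}_* (h_{I''} ⊗ h_{J''}) ≠ 0` then `|I'| ≤ |Î''|` and `|J'| ≤ |Ĵ''|`. -/
theorem stmt9 (I' J' I'' J'' : DI)
    (h : repCommAdj (fun p => haar I' p.1 * haar J' p.2)
        (fun p => haar I'' p.1 * haar J'' p.2) ≠ fun _ => 0) :
    DI.len I' ≤ DI.len (DI.parent I'') ∧ DI.len J' ≤ DI.len (DI.parent J'') := by
  constructor
  · by_contra hc
    apply h
    have hn : I'.n + 2 ≤ I''.n := by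
      simp only [DI.len, DI.parent, not_le] at hc
      have := (zpow_lt_zpow_iff_right₀ (one_lt_two : (1:ℝ) < 2)).1 hc
      omega
    rw [repCommAdj_tensor]
    funext p
    rw [main1 hn]
    beta_reduce
    ring
  · by_contra hc
    apply h
    have hn : J'.n + 2 ≤ J''.n := by
      simp only [DI.len, DI.parent, not_le] at hc
      have := (zpow_lt_zpow_iff_right₀ (one_lt_two : (1:ℝ) < 2)).1 hc
      omega
    rw [repCommAdj_tensor]
    funext p
    rw [main1 hn]
    beta_reduce
    ring
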